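/- Let T be a tree with a vertex of degree d, and let s ≥ 1. Every straight-line drawing of T with spanning ratio at most s has edge-length ratio at least 2^{⌊(d−1)/(48 s²)⌋}; in particular the edge-length ratio is 2^{Ω(d/s²)}. -/
import Mathlib


noncomputable def wlen {V : Type*} {G : SimpleGraph V} (ρ : V → EuclideanSpace ℝ (Fin 2)) :
    ∀ {u v : V}, G.Walk u v → ℝ
  | _, _, SimpleGraph.Walk.nil => 0
  | u, _, SimpleGraph.Walk.cons (v := b) _ p => dist (ρ u) (ρ b) + wlen ρ p

lemma wlen_nonneg {V : Type*} {G : SimpleGraph V} (ρ : V → EuclideanSpace ℝ (Fin 2))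
    {u v : V} (p : G.Walk u v) : 0 ≤ wlen ρ p := by
  induction p with
  | nil => simp [wlen]
  | @cons a b c h p ih =>
      rw [wlen]
      have h1 : (0:ℝ) ≤ dist (ρ a) (ρ b) := dist_nonneg
      linarith

lemma dist_le_wlen {V : Type*} {G : SimpleGraph V} (ρ : V → EuclideanSpace ℝ (Fin 2))
    {u v : V} (p : G.Walk u v) : dist (ρ u) (ρ v) ≤ wlen ρ p := by
  induction p with
  | nil => simp [wlen]
  | @cons a b c h p ih =>
      rw [wlen]
      calc dist (ρ a) (ρ c) ≤ dist (ρ a) (ρ b) + dist (ρ b) (ρ c) := dist_triangle _ _ _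
        _ ≤ dist (ρ a) (ρ b) + wlen ρ p := by linarith

lemma wlen_append {V : Type*} {G : SimpleGraph V} (ρ : V → EuclideanSpace ℝ (Fin 2))
    {u v w : V} (p : G.Walk u v) (q : G.Walk v w) :
    wlen ρ (p.append q) = wlen ρ p + wlen ρ q := by
  induction p with
  | nil => simp [wlen]
  | cons h p ih => rw [SimpleGraph.Walk.cons_append, wlen, wlen, ih]; ring

lemma mem_support_of_adj {V : Type*} [DecidableEq V] {G : SimpleGraph V} (hG : G.IsAcyclic)
    {u v w : V} (huv : G.Adj u v) (huw : G.Adj u w) (hvw : v ≠ w)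
    (p : G.Walk v w) : u ∈ p.support := by
  by_contra hu
  have hq := p.bypass_isPath
  have hsub := p.support_bypass_subset
  have huq : u ∉ p.bypass.support := fun h => hu (hsub h)
  have hp1 : (SimpleGraph.Walk.cons huv p.bypass).IsPath := hq.cons huq
  have heq := SimpleGraph.isAcyclic_iff_path_unique.mp hG ⟨_, hp1⟩ (SimpleGraph.Path.singleton huw)
  have hws : (SimpleGraph.Walk.cons huv p.bypass).support
      = (SimpleGraph.Path.singleton huw : G.Walk u w).support :=
    congrArg SimpleGraph.Walk.support (congrArg Subtype.val heq)
  rw [SimpleGraph.Walk.support_cons, SimpleGraph.Path.singleton,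
    SimpleGraph.Walk.support_cons, SimpleGraph.Walk.support_nil,
    p.bypass.support_eq_cons] at hws
  exact hvw (by injection hws with _ h; injection h)

lemma coord_abs_le_dist (x y : EuclideanSpace ℝ (Fin 2)) (i : Fin 2) :
    |x i - y i| ≤ dist x y := by
  rw [EuclideanSpace.dist_eq, ← Real.sqrt_sq_eq_abs (x i - y i)]
  apply Real.sqrt_le_sqrt
  calc (x i - y i) ^ 2 = dist (x i) (y i) ^ 2 := by rw [Real.dist_eq, sq_abs]
    _ ≤ _ := Finset.single_le_sum (f := fun j => dist (x j) (y j) ^ 2)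
      (fun j _ => sq_nonneg _) (Finset.mem_univ i)

lemma dist_lt_of_coords (x y : EuclideanSpace ℝ (Fin 2)) (c : ℝ)
    (h : ∀ i, |x i - y i| < c) : dist x y < 2 * c := by
  have hc : 0 < c := lt_of_le_of_lt (abs_nonneg _) (h 0)
  have hsq : dist x y ^ 2 < (2*c)^2 := by
    rw [EuclideanSpace.dist_eq, Real.sq_sqrt (Finset.sum_nonneg fun j _ => sq_nonneg _)]
    rw [Fin.sum_univ_two]
    have h0 := h 0; have h1 := h 1
    have e0 : dist (x 0) (y 0) = |x 0 - y 0| := Real.dist_eq _ _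
    have e1 : dist (x 1) (y 1) = |x 1 - y 1| := Real.dist_eq _ _
    rw [e0, e1]
    nlinarith [abs_nonneg (x 0 - y 0), abs_nonneg (x 1 - y 1)]
  exact lt_of_pow_lt_pow_left₀ 2 (by linarith) hsq

/-- Any straight-line drawing with spanning ratio at most `s ≥ 1` of a tree with a vertex of
degree `d` has edge-length ratio at least `2^⌊(d-1)/(48·s²)⌋`: some edge is at least that
factor longer than some other edge. -/
theorem tree_spanning_ratio_edge_length_ratio_lower_bound
    {V : Type*} [Fintype V] (G : SimpleGraph V)
    (htree : G.Connected ∧ G.IsAcyclic)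
    (u_T : V) (d : ℕ) (hd : 1 ≤ d) (hdeg : (G.neighborSet u_T).ncard = d)
    (ρ : V → EuclideanSpace ℝ (Fin 2)) (hinj : Function.Injective ρ)
    (s : ℝ) (hs : 1 ≤ s)
    (hspan : ∀ u v : V, u ≠ v → ∃ p : G.Walk u v, wlen ρ p ≤ s * dist (ρ u) (ρ v)) :
    ∃ a b c e : V, G.Adj a b ∧ G.Adj c e ∧
      (2 : ℝ) ^ ⌊((d : ℝ) - 1) / (48 * s ^ 2)⌋₊ * dist (ρ c) (ρ e) ≤ dist (ρ a) (ρ b) := by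

  classical
  obtain ⟨hconn, hacyc⟩ := htree
  have hs0 : (0:ℝ) < s := lt_of_lt_of_le one_pos hs
  have hfin : (G.neighborSet u_T).Finite := Set.toFinite _
  set A : Finset V := hfin.toFinset with hAdef
  have hmemA : ∀ v, v ∈ A ↔ G.Adj u_T v := by
    intro v; rw [hAdef, Set.Finite.mem_toFinset, SimpleGraph.mem_neighborSet]
  have hcard : A.card = d := by rw [← hdeg, Set.ncard_eq_toFinset_card _ hfin]
  have hAne : A.Nonempty := Finset.card_pos.mp (by omega)
  set f : V → ℝ := fun v => dist (ρ u_T) (ρ v) with hfdef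
  obtain ⟨e₀, he₀A, he₀min⟩ := A.exists_min_image f hAne
  obtain ⟨b₀, hb₀A, hb₀max⟩ := A.exists_max_image f hAne
  set m : ℝ := f e₀ with hmdef
  set M : ℝ := f b₀ with hMdef
  have hm0 : 0 < m := by
    rw [hmdef]
    exact dist_pos.mpr (fun h => ((hmemA e₀).mp he₀A).ne (hinj h))
  refine ⟨u_T, b₀, u_T, e₀, (hmemA b₀).mp hb₀A, (hmemA e₀).mp he₀A, ?_⟩
  set F : ℕ := ⌊((d : ℝ) - 1) / (48 * s ^ 2)⌋₊ with hFdef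
  show (2:ℝ) ^ F * m ≤ M
  rcases Nat.eq_zero_or_pos F with hF0 | hF1
  · rw [hF0, pow_zero, one_mul]; exact he₀min b₀ hb₀A
  by_contra hcon
  push_neg at hcon
  -- key spanning inequality
  have key : ∀ v ∈ A, ∀ w ∈ A, v ≠ w → f v + f w ≤ s * dist (ρ v) (ρ w) := by
    intro v hv w hw hvw
    obtain ⟨p, hp⟩ := hspan v w hvw
    have hu : u_T ∈ p.support :=
      mem_support_of_adj hacyc ((hmemA v).mp hv) ((hmemA w).mp hw) hvw p
    have hsplit := p.take_spec hu
    have happ := wlen_append ρ (p.takeUntil u_T hu) (p.dropUntil u_T hu)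
    rw [hsplit] at happ
    have h1 := dist_le_wlen ρ (p.takeUntil u_T hu)
    have h2 := dist_le_wlen ρ (p.dropUntil u_T hu)
    rw [dist_comm] at h1
    simp only [hfdef]
    linarith
  -- annulus index
  set k : V → ℕ := fun v => ⌊Real.logb 2 (f v / m)⌋₊ with hkdef
  have hann : ∀ v ∈ A, k v < F ∧ m * 2 ^ (k v) ≤ f v ∧ f v < m * 2 ^ (k v + 1) := by
    intro v hv
    have hfv : m ≤ f v := he₀min v hv
    have hfvM : f v ≤ M := hb₀max v hv
    have hx1 : 1 ≤ f v / m := (one_le_div hm0).mpr hfv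
    have hx0 : 0 < f v / m := lt_of_lt_of_le one_pos hx1
    have hlog0 : 0 ≤ Real.logb 2 (f v / m) := Real.logb_nonneg one_lt_two hx1
    have hxF : f v / m < 2 ^ F := by
      rw [div_lt_iff₀ hm0]
      calc f v ≤ M := hfvM
        _ < 2 ^ F * m := hcon
    have hrw : (2:ℝ) ^ Real.logb 2 (f v / m) = f v / m :=
      Real.rpow_logb two_pos (by norm_num) hx0
    refine ⟨?_, ?_, ?_⟩
    · apply (Nat.floor_lt hlog0).mpr
      apply (Real.rpow_lt_rpow_left_iff (x := 2) one_lt_two).mp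
      rw [hrw, Real.rpow_natCast]
      exact hxF
    · rw [mul_comm, ← le_div_iff₀ hm0]
      calc ((2:ℝ) ^ (k v) : ℝ) = (2:ℝ) ^ ((k v : ℕ) : ℝ) := (Real.rpow_natCast 2 (k v)).symm
        _ ≤ (2:ℝ) ^ Real.logb 2 (f v / m) :=
            (Real.rpow_le_rpow_left_iff (x := 2) one_lt_two).mpr (Nat.floor_le hlog0)
        _ = f v / m := hrw
    · rw [mul_comm, ← div_lt_iff₀ hm0]
      calc f v / m = (2:ℝ) ^ Real.logb 2 (f v / m) := hrw.symm
        _ < (2:ℝ) ^ (((k v + 1 : ℕ)) : ℝ) := by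
            apply (Real.rpow_lt_rpow_left_iff (x := 2) one_lt_two).mpr
            push_cast
            exact Nat.lt_floor_add_one _
        _ = (2:ℝ) ^ (k v + 1) := Real.rpow_natCast 2 (k v + 1)
  -- pigeonhole over annuli
  set n : ℕ := ⌊48 * s ^ 2⌋₊ with hndef
  have h48 : (0:ℝ) < 48 * s ^ 2 := by positivity
  have hFn : (Finset.range F).card * n < A.card := by
    rw [Finset.card_range, hcard]
    have hd1 : (1:ℝ) ≤ (d:ℝ) := by exact_mod_cast hd
    have hFle : (F : ℝ) ≤ ((d:ℝ) - 1) / (48 * s ^ 2) :=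
      Nat.floor_le (div_nonneg (by linarith) (le_of_lt h48))
    have hnle : (n : ℝ) ≤ 48 * s ^ 2 := Nat.floor_le (le_of_lt h48)
    have : (F:ℝ) * (n:ℝ) < (d:ℝ) := by
      calc (F:ℝ) * (n:ℝ) ≤ ((d:ℝ) - 1) / (48 * s ^ 2) * (48 * s ^ 2) :=
            mul_le_mul hFle hnle (Nat.cast_nonneg n)
              (div_nonneg (by linarith) (le_of_lt h48))
        _ = (d:ℝ) - 1 := div_mul_cancel₀ _ (ne_of_gt h48)
        _ < (d:ℝ) := by linarith
    exact_mod_cast this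
  obtain ⟨k₀, hk₀mem, hfib⟩ := Finset.exists_lt_card_fiber_of_mul_lt_card_of_maps_to
    (t := Finset.range F) (f := k) (fun v hv => Finset.mem_range.mpr (hann v hv).1) hFn
  set B : Finset V := A.filter (fun v => k v = k₀) with hBdef
  have hBcard : 48 * s ^ 2 < (B.card : ℝ) := by
    have h1 : (n:ℝ) + 1 ≤ (B.card : ℝ) := by exact_mod_cast hfib
    have hn1 : 48 * s ^ 2 < (n:ℝ) + 1 := Nat.lt_floor_add_one _
    linarith
  set R : ℝ := m * 2 ^ k₀ with hRdef
  have hR0 : 0 < R := by rw [hRdef]; positivity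
  set c : ℝ := R / s with hcdef
  have hc0 : 0 < c := div_pos hR0 hs0
  have hBprop : ∀ v ∈ B, v ∈ A ∧ R ≤ f v ∧ f v < 2 * R := by
    intro v hv
    rw [hBdef, Finset.mem_filter] at hv
    obtain ⟨hvA, hkv⟩ := hv
    obtain ⟨_, hlo, hhi⟩ := hann v hvA
    rw [hkv] at hlo hhi
    refine ⟨hvA, hlo, ?_⟩
    calc f v < m * 2 ^ (k₀ + 1) := hhi
      _ = 2 * R := by rw [hRdef]; ring
  -- distance between two points of B is at least 2c
  have hBdist : ∀ v ∈ B, ∀ w ∈ B, v ≠ w → 2 * c ≤ dist (ρ v) (ρ w) := by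
    intro v hv w hw hvw
    obtain ⟨hvA, hvlo, _⟩ := hBprop v hv
    obtain ⟨hwA, hwlo, _⟩ := hBprop w hw
    have hk := key v hvA w hwA hvw
    have h2R : 2 * R ≤ s * dist (ρ v) (ρ w) := by linarith
    rw [hcdef]
    rw [show 2 * (R / s) = (2 * R) / s by ring, div_le_iff₀ hs0]
    linarith [h2R, mul_comm s (dist (ρ v) (ρ w))]
  -- grid map
  set g : V → ℤ × ℤ := fun v => (⌊ρ v 0 / c⌋, ⌊ρ v 1 / c⌋) with hgdef
  have hcoord : ∀ v ∈ B, ∀ i : Fin 2, |ρ v i - ρ u_T i| < 2 * R := by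
    intro v hv i
    obtain ⟨hvA, _, hhi⟩ := hBprop v hv
    calc |ρ v i - ρ u_T i| ≤ dist (ρ v) (ρ u_T) := coord_abs_le_dist _ _ i
      _ = f v := by rw [hfdef, dist_comm]
      _ < 2 * R := hhi
  set S : Finset (ℤ × ℤ) :=
    (Finset.Icc ⌊(ρ u_T 0 - 2*R)/c⌋ ⌊(ρ u_T 0 + 2*R)/c⌋) ×ˢ
    (Finset.Icc ⌊(ρ u_T 1 - 2*R)/c⌋ ⌊(ρ u_T 1 + 2*R)/c⌋) with hSdef
  have hIcc : ∀ v ∈ B, ∀ i : Fin 2,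
      ⌊(ρ u_T i - 2*R)/c⌋ ≤ ⌊ρ v i / c⌋ ∧ ⌊ρ v i / c⌋ ≤ ⌊(ρ u_T i + 2*R)/c⌋ := by
    intro v hv i
    have h := hcoord v hv i
    rw [abs_lt] at h
    constructor <;> apply Int.floor_le_floor <;>
      [exact div_le_div_of_nonneg_right (by linarith) hc0.le;
       exact div_le_div_of_nonneg_right (by linarith) hc0.le]
  have hmapsS : ∀ v ∈ B, g v ∈ S := by
    intro v hv
    rw [hSdef, Finset.mem_product]
    exact ⟨Finset.mem_Icc.mpr ⟨(hIcc v hv 0).1, (hIcc v hv 0).2⟩,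
           Finset.mem_Icc.mpr ⟨(hIcc v hv 1).1, (hIcc v hv 1).2⟩⟩
  -- injectivity of the grid map on B
  have hginj : Set.InjOn g (B : Set V) := by
    intro v hv w hw hgvw
    by_contra hvw
    have hvB : v ∈ B := hv
    have hwB : w ∈ B := hw
    have hdistlt : dist (ρ v) (ρ w) < 2 * c := by
      apply dist_lt_of_coords
      intro i
      have hfl : ⌊ρ v i / c⌋ = ⌊ρ w i / c⌋ := by
        fin_cases i
        · exact congrArg Prod.fst hgvw
        · exact congrArg Prod.snd hgvw
      have h1 : (⌊ρ v i / c⌋ : ℝ) ≤ ρ v i / c := Int.floor_le _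
      have h2 : ρ v i / c < ⌊ρ v i / c⌋ + 1 := Int.lt_floor_add_one _
      have h3 : (⌊ρ w i / c⌋ : ℝ) ≤ ρ w i / c := Int.floor_le _
      have h4 : ρ w i / c < ⌊ρ w i / c⌋ + 1 := Int.lt_floor_add_one _
      rw [hfl] at h1 h2
      have hlt1 : |ρ v i / c - ρ w i / c| < 1 := by rw [abs_lt]; constructor <;> linarith
      have heqd : |ρ v i - ρ w i| = |ρ v i / c - ρ w i / c| * c := by
        rw [div_sub_div_same, abs_div, abs_of_pos hc0, div_mul_cancel₀ _ (ne_of_gt hc0)]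
      rw [heqd]
      calc |ρ v i / c - ρ w i / c| * c < 1 * c := by
            exact mul_lt_mul_of_pos_right hlt1 hc0
        _ = c := one_mul c
    exact absurd (hBdist v hvB w hwB hvw) (by linarith)
  -- cardinality bound
  have hIccCard : ∀ a : ℝ, ((Finset.Icc ⌊(a - 2*R)/c⌋ ⌊(a + 2*R)/c⌋).card : ℝ) ≤ 6 * s := by
    intro a
    rw [Int.card_Icc]
    set L := ⌊(a - 2*R)/c⌋ with hL
    set U := ⌊(a + 2*R)/c⌋ with hU
    have h1 : (U:ℝ) ≤ (a + 2*R)/c := Int.floor_le _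
    have h2 : (a - 2*R)/c - 1 < (L:ℝ) := Int.sub_one_lt_floor _
    have h4 : (a + 2*R)/c - (a - 2*R)/c = 4 * s := by
      rw [hcdef]
      field_simp
      ring
    have hz : ((U + 1 - L : ℤ) : ℝ) ≤ 6 * s := by push_cast; linarith
    rcases le_or_gt (U + 1 - L) 0 with h | h
    · rw [Int.toNat_of_nonpos h]; push_cast; positivity
    · have hcast : (((U + 1 - L).toNat : ℕ) : ℝ) = ((U + 1 - L : ℤ) : ℝ) := by
        exact_mod_cast congrArg (Int.cast : ℤ → ℝ) (Int.toNat_of_nonneg h.le)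
      rw [hcast]; exact hz
  have hScard : (S.card : ℝ) ≤ 36 * s ^ 2 := by
    rw [hSdef, Finset.card_product]
    push_cast
    calc ((Finset.Icc ⌊(ρ u_T 0 - 2*R)/c⌋ ⌊(ρ u_T 0 + 2*R)/c⌋).card : ℝ)
          * ((Finset.Icc ⌊(ρ u_T 1 - 2*R)/c⌋ ⌊(ρ u_T 1 + 2*R)/c⌋).card : ℝ)
        ≤ (6 * s) * (6 * s) :=
          mul_le_mul (hIccCard _) (hIccCard _) (Nat.cast_nonneg _) (by positivity)
      _ = 36 * s ^ 2 := by ring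
  have hBS : B.card ≤ S.card := Finset.card_le_card_of_injOn g hmapsS hginj
  have hfin2 : (B.card : ℝ) ≤ (S.card : ℝ) := by exact_mod_cast hBS
  have hs2 : (0:ℝ) < s ^ 2 := by positivity
  linarith
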